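/- Let n be a positive integer and d̃ = binom(n+d-1, d-1). For 1 ≤ p < 2, d̃^{1/p} d^{-n/2} ≤ max_{ζ ∈ ℂ^d, |ζ|=1} |Z(ζ)|_p ≤ d̃^{1/p - 1/2}; and for 2 ≤ p < ∞, max_{ζ ∈ ℂ^d, |ζ|=1} |Z(ζ)|_p = 1. -/

import Mathlib

open MeasureTheory Complex Metric
open scoped ENNReal Classical

noncomputable section

abbrev Cd (d : ℕ) : Type := EuclideanSpace ℂ (Fin d)

instance (d : ℕ) : MeasurableSpace (Cd d) := borel _
instance (d : ℕ) : BorelSpace (Cd d) := ⟨rfl⟩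
noncomputable instance (d : ℕ) : MeasureSpace (Cd d) := measureSpaceOfInnerProductSpace

/-- The open unit ball of `ℂ^d`. -/
def unitBall (d : ℕ) : Set (Cd d) := Metric.ball 0 1

/-- Lebesgue measure on `ℂ^d`, normalized so that the unit ball has measure one. -/
def normVol (d : ℕ) : Measure (Cd d) := (volume (unitBall d))⁻¹ • volume

/-- The inner product `⟨z,w⟩ = ∑ z_j conj (w_j)`. -/
def herm {d : ℕ} (z w : Cd d) : ℂ := ∑ j, z j * (starRingEnd ℂ) (w j)

/-- The normalizing constant `c_σ`. -/
def cCoef (d : ℕ) (σ : ℝ) : ℝ :=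
  Real.Gamma (d + σ + 1) / (Real.Gamma (σ + 1) * Real.Gamma (d + 1))

/-- The Bergman kernel `K_σ(z,w) = (1-|w|²)^σ / (1-⟨z,w⟩)^{d+1+σ}`. -/
def bergKer (d : ℕ) (σ : ℝ) (z w : Cd d) : ℂ :=
  (((1 - ‖w‖ ^ 2 : ℝ) ^ σ : ℝ) : ℂ) / (1 - herm z w) ^ ((((d : ℝ) + 1 + σ : ℝ)) : ℂ)

/-- The Bergman projection `T_σ f (z) = c_σ ∫_B K_σ(z,w) f(w) dv(w)`. -/
def bergman (d : ℕ) (σ : ℝ) (f : Cd d → ℂ) (z : Cd d) : ℂ :=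
  (cCoef d σ : ℂ) * ∫ w in unitBall d, bergKer d σ z w * f w ∂(normVol d)

/-- The complex partial derivative `∂/∂z_j`. -/
def pd (d : ℕ) (j : Fin d) (f : Cd d → ℂ) : Cd d → ℂ :=
  fun z => fderiv ℂ f z (EuclideanSpace.single j 1)

/-- The complex partial derivative `∂^α` for a multi-index `α`. -/
def mpd (d : ℕ) (α : Fin d → ℕ) (f : Cd d → ℂ) : Cd d → ℂ :=
  (List.finRange d).foldr (fun j g => (pd d j)^[α j] g) f

/-- Multi-indices `α ∈ ℤ₊^d` with `|α| = n`; there are `d̃ = (n+d-1).choose (d-1)` of them. -/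
def MIdx (d n : ℕ) : Type := {α : Fin d → ℕ // ∑ j, α j = n}

instance (d n : ℕ) : Fintype (MIdx d n) :=
  Fintype.subtype (Finset.Nat.antidiagonalTuple d n)
    (fun _ => Finset.Nat.mem_antidiagonalTuple)

/-- `𝒟_z f (z) = (∂^α f(z))_{|α|=n} ∈ ℂ^{d̃}`. -/
def Dmap (d n : ℕ) (f : Cd d → ℂ) (z : Cd d) : MIdx d n → ℂ := fun α => mpd d α.1 f z

/-- `Z(ζ) = (ζ^α)_{|α|=n} ∈ ℂ^{d̃}`. -/
def Zmap (d n : ℕ) (ζ : Cd d) : MIdx d n → ℂ := fun α => ∏ j, ζ j ^ α.1 j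

/-- The Bloch seminorm `‖f‖_𝓑 = sup_{z∈B} (1-|z|²)^n |𝒟_z f(z)|` w.r.t. a norm `N` on `ℂ^{d̃}`. -/
def blochSemi (d n : ℕ) (N : (MIdx d n → ℂ) → ℝ) (f : Cd d → ℂ) : ℝ :=
  ⨆ z : unitBall d, (1 - ‖(z : Cd d)‖ ^ 2) ^ n * N (Dmap d n f z)

/-- The seminorm of `T_σ : L^∞(B) → 𝓑`, i.e. `sup_{‖G‖_∞ ≤ 1} ‖T_σ G‖_𝓑`. -/
def opSemi (d n : ℕ) (σ : ℝ) (N : (MIdx d n → ℂ) → ℝ) : ℝ :=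
  ⨆ G : {G : Cd d → ℂ // Measurable G ∧ ∀ w, ‖G w‖ ≤ 1},
    blochSemi d n N (bergman d σ G.1)

/-- `𝓒 = max_{|ζ|=1} |Z(ζ)|`. -/
def maxC (d n : ℕ) (N : (MIdx d n → ℂ) → ℝ) : ℝ :=
  ⨆ ζ : Metric.sphere (0 : Cd d) 1, N (Zmap d n (ζ : Cd d))

/-- The Möbius automorphism `φ_z` of the unit ball, with `φ_0 = -id`. -/
def moebius (d : ℕ) (z ω : Cd d) : Cd d :=
  if z = 0 then -ω
  else (1 - herm ω z)⁻¹ •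
    (z - (herm ω z / ((‖z‖ ^ 2 : ℝ) : ℂ)) • z
       - ((Real.sqrt (1 - ‖z‖ ^ 2) : ℝ) : ℂ) • (ω - (herm ω z / ((‖z‖ ^ 2 : ℝ) : ℂ)) • z))

end

section AuxLemmas

open Finset in
lemma card_MIdx_aux (d n : ℕ) (hd : 0 < d) :
    Fintype.card (MIdx d n) = (n + d - 1).choose (d - 1) := by
  have e : MIdx d n ≃ Sym (Fin d) n :=
    (Equiv.refl ({P : Fin d → ℕ // ∑ i, P i = n})).trans
      (Sym.equivNatSumOfFintype (Fin d) n).symm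
  rw [Fintype.card_congr e, Sym.card_sym_eq_choose, Fintype.card_fin]
  have h1 : d + n - 1 = n + d - 1 := by omega
  have h3 := Nat.choose_symm (show d - 1 ≤ n + d - 1 by omega)
  rw [show (n + d - 1) - (d - 1) = n by omega] at h3
  rw [h1, h3]

lemma sum_prod_pow_le_aux (d n : ℕ) (x : Fin d → ℝ) (hx : ∀ j, 0 ≤ x j) :
    ∑ α : MIdx d n, ∏ j, x j ^ α.1 j ≤ (∑ j, x j) ^ n := by
  rw [Finset.sum_pow_eq_sum_piAntidiag]
  have hsub : ∑ α : MIdx d n, ∏ j, x j ^ α.1 j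
      = ∑ k ∈ Finset.piAntidiag Finset.univ n, ∏ j, x j ^ k j := by
    refine (Finset.sum_subtype (Finset.piAntidiag Finset.univ n)
      (p := fun α : Fin d → ℕ => ∑ j, α j = n)
      (fun k => by simp [Finset.mem_piAntidiag]) (fun k => ∏ j, x j ^ k j)).symm
  rw [hsub]
  refine Finset.sum_le_sum fun k hk => ?_
  have h1 : (1:ℝ) ≤ (Nat.multinomial Finset.univ k : ℝ) := by
    exact_mod_cast Nat.one_le_iff_ne_zero.2 (Nat.multinomial_pos _ _).ne'
  have h0 : (0:ℝ) ≤ ∏ j, x j ^ k j := Finset.prod_nonneg fun j _ => pow_nonneg (hx j) _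
  nlinarith

lemma norm_Zmap_aux (d n : ℕ) (ζ : Cd d) (α : MIdx d n) :
    ‖Zmap d n ζ α‖ = ∏ j, ‖ζ j‖ ^ α.1 j := by
  simp [Zmap, norm_prod, norm_pow]

lemma sum_sq_coords_aux (d : ℕ) (ζ : Cd d) (h : ‖ζ‖ = 1) :
    ∑ j, ‖ζ j‖ ^ 2 = 1 := by
  have hS : (0:ℝ) ≤ ∑ j, ‖ζ j‖ ^ 2 := Finset.sum_nonneg fun j _ => sq_nonneg _
  have := EuclideanSpace.norm_eq ζ
  rw [h] at this
  nlinarith [Real.sq_sqrt hS]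

lemma L2_bound_aux (d n : ℕ) (ζ : Cd d) (h : ‖ζ‖ = 1) :
    ∑ α : MIdx d n, ‖Zmap d n ζ α‖ ^ 2 ≤ 1 := by
  have key : ∀ α : MIdx d n, ‖Zmap d n ζ α‖ ^ 2 = ∏ j, (‖ζ j‖ ^ 2) ^ α.1 j := by
    intro α
    rw [norm_Zmap_aux, ← Finset.prod_pow]
    exact Finset.prod_congr rfl fun j _ => (pow_right_comm _ _ _)
  calc ∑ α : MIdx d n, ‖Zmap d n ζ α‖ ^ 2
      = ∑ α : MIdx d n, ∏ j, (‖ζ j‖ ^ 2) ^ α.1 j := Finset.sum_congr rfl fun α _ => key α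
    _ ≤ (∑ j, ‖ζ j‖ ^ 2) ^ n := sum_prod_pow_le_aux d n _ fun j => sq_nonneg _
    _ = 1 := by rw [sum_sq_coords_aux d ζ h, one_pow]

end AuxLemmas

/-- Bounds for `max_{|ζ|=1} |Z(ζ)|_p`: it lies between `d̃^{1/p} d^{-n/2}` and `d̃^{1/p-1/2}`
for `1 ≤ p < 2`, and equals `1` for `2 ≤ p < ∞`. -/
theorem max_Zmap_lp_bounds
    (d n : ℕ) (hd : 0 < d) (hn : 0 < n) (p : ℝ) (hp : 1 ≤ p)
    (M : ℝ)
    (hM : M = ⨆ ζ : Metric.sphere (0 : Cd d) 1,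
        (∑ α : MIdx d n, ‖Zmap d n (ζ : Cd d) α‖ ^ p) ^ (1 / p)) :
    (p < 2 →
      ((Nat.choose (n + d - 1) (d - 1) : ℝ) ^ (1 / p) * (d : ℝ) ^ (-(n : ℝ) / 2) ≤ M ∧
        M ≤ (Nat.choose (n + d - 1) (d - 1) : ℝ) ^ (1 / p - 1 / 2))) ∧
    (2 ≤ p → M = 1) := by
  have hp0 : (0:ℝ) < p := lt_of_lt_of_le one_pos hp
  have hp0' : p ≠ 0 := hp0.ne'
  set j0 : Fin d := ⟨0, hd⟩ with hj0def
  have hαsum : ∑ j, (if j = j0 then n else 0) = n := by simp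
  set αstar : MIdx d n := ⟨fun j => if j = j0 then n else 0, hαsum⟩ with hαstardef
  set Dr : ℝ := (Fintype.card (MIdx d n) : ℝ) with hDr
  have hDrpos : 0 < Dr := by
    have h0 : 0 < Fintype.card (MIdx d n) := Fintype.card_pos_iff.2 ⟨αstar⟩
    rw [hDr]
    exact_mod_cast h0
  have hcard : ((n + d - 1).choose (d - 1) : ℝ) = Dr := by
    rw [hDr, card_MIdx_aux d n hd]
  -- the witness ζ1 = e_{j0}
  set ζ1 : Cd d := EuclideanSpace.single j0 (1:ℂ) with hζ1def
  have hζ1 : ‖ζ1‖ = 1 := by rw [hζ1def, EuclideanSpace.norm_single, norm_one]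
  have hmem1 : ζ1 ∈ Metric.sphere (0 : Cd d) 1 := mem_sphere_zero_iff_norm.mpr hζ1
  haveI hne : Nonempty (Metric.sphere (0 : Cd d) 1) := ⟨⟨ζ1, hmem1⟩⟩
  have hZ1 : ∀ α : MIdx d n, ‖Zmap d n ζ1 α‖ ^ p = if α = αstar then 1 else 0 := by
    intro α
    by_cases hα : α = αstar
    · subst hα
      have hone : Zmap d n ζ1 αstar = 1 := by
        rw [Zmap, Finset.prod_eq_one]
        intro j _
        by_cases hj : j = j0
        · subst hj; simp [hζ1def, EuclideanSpace.single_apply, hαstardef]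
        · simp [hζ1def, EuclideanSpace.single_apply, hj, hαstardef]
      rw [if_pos rfl, hone, norm_one, Real.one_rpow]
    · have hj : ∃ j, j ≠ j0 ∧ α.1 j ≠ 0 := by
        by_contra hcon
        push_neg at hcon
        apply hα
        have hsum : α.1 j0 = n := by
          have h2 := α.2
          rwa [Finset.sum_eq_single j0 (fun j _ hneq => hcon j hneq)
            (by intro h; exact absurd (Finset.mem_univ j0) h)] at h2
        apply Subtype.ext
        funext j
        by_cases hjj : j = j0
        · subst hjj; simp [hαstardef, hsum]
        · simp [hαstardef, hjj, hcon j hjj]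
      obtain ⟨j, hjne, hjα⟩ := hj
      have hZ : Zmap d n ζ1 α = 0 := by
        rw [Zmap]
        apply Finset.prod_eq_zero (Finset.mem_univ j)
        rw [hζ1def, EuclideanSpace.single_apply, if_neg hjne, zero_pow hjα]
      rw [if_neg hα, hZ, norm_zero, Real.zero_rpow hp0']
  have hsum1 : ∑ α : MIdx d n, ‖Zmap d n ζ1 α‖ ^ p = 1 := by
    rw [Finset.sum_congr rfl fun α _ => hZ1 α]
    simp
  -- coordinatewise bounds on the sphere
  have coord_le : ∀ ζ : Cd d, ‖ζ‖ = 1 → ∀ j, ‖ζ j‖ ≤ 1 := by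
    intro ζ h j
    have h1 := sum_sq_coords_aux d ζ h
    have h2 : ‖ζ j‖ ^ 2 ≤ 1 := by
      rw [← h1]
      exact Finset.single_le_sum (f := fun i => ‖ζ i‖ ^ 2) (fun i _ => sq_nonneg _) (Finset.mem_univ j)
    nlinarith [norm_nonneg (ζ j)]
  have hZle1 : ∀ ζ : Cd d, ‖ζ‖ = 1 → ∀ α : MIdx d n, ‖Zmap d n ζ α‖ ≤ 1 := by
    intro ζ h α
    rw [norm_Zmap_aux]
    exact Finset.prod_le_one (fun j _ => pow_nonneg (norm_nonneg _) _)
      (fun j _ => pow_le_one₀ (norm_nonneg _) (coord_le ζ h j))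
  have hL2r : ∀ ζ : Cd d, ‖ζ‖ = 1 → ∑ α : MIdx d n, ‖Zmap d n ζ α‖ ^ (2:ℝ) ≤ 1 := by
    intro ζ h
    have h2 := L2_bound_aux d n ζ h
    calc ∑ α : MIdx d n, ‖Zmap d n ζ α‖ ^ (2:ℝ)
        = ∑ α : MIdx d n, ‖Zmap d n ζ α‖ ^ (2:ℕ) := by
          refine Finset.sum_congr rfl fun α _ => ?_
          rw [show ((2:ℝ)) = ((2:ℕ):ℝ) by norm_num, Real.rpow_natCast]
      _ ≤ 1 := h2
  constructor
  · -- case p < 2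
    intro hplt
    have hple : p ≤ 2 := le_of_lt hplt
    -- the key upper bound on the sphere
    have boundP : ∀ ζ : Cd d, ‖ζ‖ = 1 →
        (∑ α : MIdx d n, ‖Zmap d n ζ α‖ ^ p) ^ (1/p) ≤ Dr ^ (1/p - 1/2) := by
      intro ζ h
      have hanneg : ∀ α : MIdx d n, (0:ℝ) ≤ ‖Zmap d n ζ α‖ := fun α => norm_nonneg _
      set S : ℝ := ∑ α : MIdx d n, ‖Zmap d n ζ α‖ ^ p with hSdef
      have hSnn : 0 ≤ S :=
        Finset.sum_nonneg fun α _ => Real.rpow_nonneg (hanneg α) p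
      have hq : (1:ℝ) ≤ 2/p := by rw [le_div_iff₀ hp0]; linarith
      have hw : ∑ _α : MIdx d n, Dr⁻¹ = 1 := by
        rw [Finset.sum_const, Finset.card_univ, nsmul_eq_mul, ← hDr,
          mul_inv_cancel₀ hDrpos.ne']
      have hmean := Real.rpow_arith_mean_le_arith_mean_rpow Finset.univ
        (fun _ : MIdx d n => Dr⁻¹) (fun α : MIdx d n => ‖Zmap d n ζ α‖ ^ p)
        (fun _ _ => by positivity) hw
        (fun α _ => Real.rpow_nonneg (hanneg α) p) hq
      have hexp : ∀ α : MIdx d n, (‖Zmap d n ζ α‖ ^ p) ^ ((2:ℝ)/p)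
          = ‖Zmap d n ζ α‖ ^ (2:ℝ) := by
        intro α
        rw [← Real.rpow_mul (hanneg α)]
        congr 1
        field_simp
      have hmean' : (Dr⁻¹ * S) ^ ((2:ℝ)/p) ≤ Dr⁻¹ := by
        calc (Dr⁻¹ * S) ^ ((2:ℝ)/p)
            = (∑ α : MIdx d n, Dr⁻¹ * ‖Zmap d n ζ α‖ ^ p) ^ ((2:ℝ)/p) := by
              rw [← Finset.mul_sum]
          _ ≤ ∑ α : MIdx d n, Dr⁻¹ * (‖Zmap d n ζ α‖ ^ p) ^ ((2:ℝ)/p) := hmean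
          _ = Dr⁻¹ * ∑ α : MIdx d n, ‖Zmap d n ζ α‖ ^ (2:ℝ) := by
              rw [← Finset.mul_sum]
              congr 1
              exact Finset.sum_congr rfl fun α _ => hexp α
          _ ≤ Dr⁻¹ * 1 := by
              have := hL2r ζ h
              have hinv : (0:ℝ) ≤ Dr⁻¹ := by positivity
              nlinarith
          _ = Dr⁻¹ := mul_one _
      have hnn : (0:ℝ) ≤ Dr⁻¹ * S := by positivity
      have h2 : Dr⁻¹ * S ≤ Dr⁻¹ ^ (p/2) := by
        have h2' := Real.rpow_le_rpow (Real.rpow_nonneg hnn _) hmean'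
          (by positivity : (0:ℝ) ≤ p/2)
        rwa [← Real.rpow_mul hnn, show (2/p)*(p/2) = 1 by field_simp,
          Real.rpow_one] at h2'
      have h3 : S ≤ Dr ^ (1 - p/2 : ℝ) := by
        have h4 := mul_le_mul_of_nonneg_left h2 hDrpos.le
        rw [← mul_assoc, mul_inv_cancel₀ hDrpos.ne', one_mul] at h4
        calc S ≤ Dr * Dr⁻¹ ^ (p/2) := h4
          _ = Dr ^ (1:ℝ) * Dr ^ (-(p/2)) := by
              rw [Real.rpow_one, Real.inv_rpow hDrpos.le, ← Real.rpow_neg hDrpos.le]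
          _ = Dr ^ (1 - p/2 : ℝ) := by
              rw [← Real.rpow_add hDrpos]
              norm_num [sub_eq_add_neg]
      calc S ^ (1/p) ≤ (Dr ^ (1 - p/2 : ℝ)) ^ (1/p) :=
            Real.rpow_le_rpow hSnn h3 (by positivity)
        _ = Dr ^ (1/p - 1/2) := by
            rw [← Real.rpow_mul hDrpos.le]
            congr 1
            rw [mul_one_div, sub_div, div_div, mul_comm 2 p, ← div_div, div_self hp0']
    have hbdd : BddAbove (Set.range fun ζ : Metric.sphere (0 : Cd d) 1 =>
        (∑ α : MIdx d n, ‖Zmap d n (ζ : Cd d) α‖ ^ p) ^ (1/p)) := by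
      refine ⟨Dr ^ (1/p - 1/2), ?_⟩
      rintro y ⟨ζ, rfl⟩
      exact boundP ζ (mem_sphere_zero_iff_norm.mp ζ.2)
    -- lower-bound witness ζ0
    have hdpos : (0:ℝ) < d := by exact_mod_cast hd
    set t : ℝ := (Real.sqrt d)⁻¹ with htdef
    have htnn : 0 ≤ t := by positivity
    set ζ0 : Cd d := WithLp.toLp 2 (fun _ => (t : ℂ)) with hζ0def
    have hζ0coord : ∀ j : Fin d, ζ0 j = (t : ℂ) := fun j => rfl
    have hnormcoord : ∀ j : Fin d, ‖ζ0 j‖ = t := by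
      intro j
      rw [hζ0coord j]
      simp [Complex.norm_real, _root_.abs_of_nonneg htnn]
    have hζ0 : ‖ζ0‖ = 1 := by
      rw [EuclideanSpace.norm_eq]
      have hcoord : ∀ j : Fin d, ‖ζ0 j‖ ^ 2 = (d:ℝ)⁻¹ := by
        intro j
        rw [hnormcoord j, htdef, inv_pow, Real.sq_sqrt hdpos.le]
      rw [Finset.sum_congr rfl fun j _ => hcoord j, Finset.sum_const, Finset.card_univ,
        Fintype.card_fin, nsmul_eq_mul, mul_inv_cancel₀ hdpos.ne', Real.sqrt_one]
    have hZ0 : ∀ α : MIdx d n, ‖Zmap d n ζ0 α‖ = t ^ n := by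
      intro α
      rw [norm_Zmap_aux, Finset.prod_congr rfl fun j _ => by rw [hnormcoord j],
        Finset.prod_pow_eq_pow_sum, α.2]
    have hsum0 : ∑ α : MIdx d n, ‖Zmap d n ζ0 α‖ ^ p = Dr * (t ^ n) ^ p := by
      rw [Finset.sum_congr rfl fun α _ => by rw [hZ0 α], Finset.sum_const,
        Finset.card_univ, nsmul_eq_mul, ← hDr]
    have hval0 : (∑ α : MIdx d n, ‖Zmap d n ζ0 α‖ ^ p) ^ (1/p)
        = Dr ^ (1/p) * (d:ℝ) ^ (-(n:ℝ)/2) := by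
      rw [hsum0, Real.mul_rpow hDrpos.le (Real.rpow_nonneg (pow_nonneg htnn n) p)]
      congr 1
      rw [← Real.rpow_mul (pow_nonneg htnn n), mul_one_div, div_self hp0',
        Real.rpow_one]
      have ht2 : t = (d:ℝ) ^ (-(1/2) : ℝ) := by
        rw [htdef, Real.sqrt_eq_rpow, ← Real.rpow_neg hdpos.le]
      rw [ht2, ← Real.rpow_natCast ((d:ℝ) ^ (-(1/2):ℝ)) n, ← Real.rpow_mul hdpos.le]
      congr 1
      ring
    constructor
    · rw [hM, ← hcard] at *
      rw [← hval0]
      exact le_ciSup hbdd ⟨ζ0, mem_sphere_zero_iff_norm.mpr hζ0⟩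
    · rw [hM, hcard]
      exact ciSup_le fun ζ => boundP ζ (mem_sphere_zero_iff_norm.mp ζ.2)
  · -- case 2 ≤ p
    intro hp2
    have boundTwo : ∀ ζ : Cd d, ‖ζ‖ = 1 →
        (∑ α : MIdx d n, ‖Zmap d n ζ α‖ ^ p) ^ (1/p) ≤ 1 := by
      intro ζ h
      have hsle : ∑ α : MIdx d n, ‖Zmap d n ζ α‖ ^ p
          ≤ ∑ α : MIdx d n, ‖Zmap d n ζ α‖ ^ (2:ℝ) := by
        refine Finset.sum_le_sum fun α _ => ?_
        rcases eq_or_lt_of_le (norm_nonneg (Zmap d n ζ α)) with h0 | h0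
        · rw [← h0, Real.zero_rpow hp0', Real.zero_rpow (by norm_num)]
        · exact Real.rpow_le_rpow_of_exponent_ge h0 (hZle1 ζ h α) hp2
      have hle1 : ∑ α : MIdx d n, ‖Zmap d n ζ α‖ ^ p ≤ 1 := hsle.trans (hL2r ζ h)
      exact Real.rpow_le_one
        (Finset.sum_nonneg fun α _ => Real.rpow_nonneg (norm_nonneg _) p)
        hle1 (by positivity)
    have hbdd1 : BddAbove (Set.range fun ζ : Metric.sphere (0 : Cd d) 1 =>
        (∑ α : MIdx d n, ‖Zmap d n (ζ : Cd d) α‖ ^ p) ^ (1/p)) := by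
      refine ⟨1, ?_⟩
      rintro y ⟨ζ, rfl⟩
      exact boundTwo ζ (mem_sphere_zero_iff_norm.mp ζ.2)
    rw [hM]
    refine le_antisymm
      (ciSup_le fun ζ => boundTwo ζ (mem_sphere_zero_iff_norm.mp ζ.2)) ?_
    calc (1:ℝ) = (∑ α : MIdx d n, ‖Zmap d n ζ1 α‖ ^ p) ^ (1/p) := by
          rw [hsum1, Real.one_rpow]
      _ ≤ _ := le_ciSup hbdd1 ⟨ζ1, hmem1⟩
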